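/- Let R be a UFD, I a nonzero ideal with k = gcd(I) ≠ 0, and b̂ ∈ R/I nonzero with pre-image b. Then δ ∈ R is the divisor part of some I-pre-image of b̂ if and only if δ is a greatest common divisor of b and k. In particular, the divisor parts of all I-pre-images of b̂ are associates. -/

import Mathlib

section Aux
variable {R : Type*} [CommRing R] [IsDomain R] [UniqueFactorizationMonoid R]

/-- If no prime divides both `w` and `z` (with `z ≠ 0`), every common divisor is a unit. -/
lemma aux_relprime_of_no_prime {w z : R} (hz : z ≠ 0)
    (h : ∀ q : R, Prime q → q ∣ w → ¬ q ∣ z) : ∀ d : R, d ∣ w → d ∣ z → IsUnit d := by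
  intro d hdw hdz
  by_contra hdu
  have hd0 : d ≠ 0 := fun h0 => hz (by simpa [h0] using hdz)
  obtain ⟨q, hq, hqd⟩ := WfDvdMonoid.exists_irreducible_factor hdu hd0
  exact h q (UniqueFactorizationMonoid.irreducible_iff_prime.mp hq)
    (hqd.trans hdw) (hqd.trans hdz)

/-- Key lemma: there is `w` with `k * w ∈ I` and `w` coprime to any given `k' ≠ 0`. -/
lemma aux_exists_coprime_multiplier (I : Ideal R) (hI : I ≠ ⊥) (k : R) (hk0 : k ≠ 0)
    (hkdvd : ∀ a ∈ I, k ∣ a) (hkgcd : ∀ d : R, (∀ a ∈ I, d ∣ a) → d ∣ k) :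
    ∀ k' : R, k' ≠ 0 → ∃ w : R, k * w ∈ I ∧ ∀ d : R, d ∣ w → d ∣ k' → IsUnit d := by
  intro k'
  induction k' using UniqueFactorizationMonoid.induction_on_prime with
  | h₁ => intro h; exact absurd rfl h
  | h₂ x hx =>
    intro _
    obtain ⟨a, haI, ha0⟩ := Submodule.exists_mem_ne_zero_of_ne_bot hI
    obtain ⟨w, hw⟩ := hkdvd a haI
    exact ⟨w, hw ▸ haI, fun d _ hdx => isUnit_of_dvd_unit hdx hx⟩
  | h₃ a p ha0 hp ih =>
    intro _
    obtain ⟨w, hwI, hw⟩ := ih ha0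
    -- get w' with k * w' ∈ I and ¬ p ∣ w'
    have hw' : ∃ w' : R, k * w' ∈ I ∧ ¬ p ∣ w' := by
      by_contra hcon
      push_neg at hcon
      have : p * k ∣ k := by
        apply hkgcd
        intro x hxI
        obtain ⟨v, hv⟩ := hkdvd x hxI
        obtain ⟨u, hu⟩ := hcon v (hv ▸ hxI)
        exact ⟨u, by rw [hv, hu]; ring⟩
      obtain ⟨u, hu⟩ := this
      have : k * 1 = k * (p * u) := by rw [mul_one]; nth_rewrite 1 [hu]; ring
      have h1 : (1 : R) = p * u := mul_left_cancel₀ hk0 this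
      exact hp.not_isUnit (IsUnit.of_mul_eq_one (a := p) u h1.symm)
    obtain ⟨w', hw'I, hpw'⟩ := hw'
    have hpa0 : p * a ≠ 0 := mul_ne_zero hp.ne_zero ha0
    -- helper: from "no prime divides both", conclude
    by_cases hpw : p ∣ w
    · -- use w'' = w + a * w'
      refine ⟨w + a * w', ?_, ?_⟩
      · have : k * (w + a * w') = k * w + a * (k * w') := by ring
        rw [this]
        exact I.add_mem hwI (I.smul_mem a hw'I)
      · apply aux_relprime_of_no_prime hpa0
        intro q hq hqw hqpa
        rcases hq.dvd_mul.mp hqpa with hqp | hqa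
        · -- q ∣ p so p ∣ w + a*w', but p ∣ w and p ∤ a * w'
          have hpq : p ∣ q := ((hq.irreducible.dvd_irreducible_iff_associated
            hp.irreducible).mp hqp).symm.dvd
          have hpww : p ∣ w + a * w' := hpq.trans hqw
          have : p ∣ a * w' := (dvd_add_right hpw).mp hpww
          rcases hp.dvd_mul.mp this with h | h
          · exact hp.not_isUnit (hw p hpw h)
          · exact hpw' h
        · have hqw2 : q ∣ w := by
            have : q ∣ a * w' := Dvd.dvd.mul_right hqa w'
            have := dvd_sub hqw this
            simpa using this
          exact hq.not_isUnit (hw q hqw2 hqa)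
    · -- w works
      refine ⟨w, hwI, ?_⟩
      apply aux_relprime_of_no_prime hpa0
      intro q hq hqw hqpa
      rcases hq.dvd_mul.mp hqpa with hqp | hqa
      · have hpq : p ∣ q := ((hq.irreducible.dvd_irreducible_iff_associated
          hp.irreducible).mp hqp).symm.dvd
        exact hpw (hpq.trans hqw)
      · exact hq.not_isUnit (hw q hqw hqa)
end Aux

theorem stmt10 {R : Type*} [CommRing R] [IsDomain R] [UniqueFactorizationMonoid R]
    (I : Ideal R) (hI : I ≠ ⊥) (k : R) (hk0 : k ≠ 0)
    (hk : (∀ a ∈ I, k ∣ a) ∧ ∀ d : R, (∀ a ∈ I, d ∣ a) → d ∣ k)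
    (b : R) (hb : Ideal.Quotient.mk I b ≠ 0) (δ : R) :
    (∃ r : R, Ideal.Quotient.mk I (r * δ) = Ideal.Quotient.mk I b ∧
        (∀ d : R, d ∣ r → d ∣ k → IsUnit d) ∧ (δ = 0 ∨ δ ∣ k)) ↔
      (δ ∣ b ∧ δ ∣ k ∧ ∀ d : R, d ∣ b → d ∣ k → d ∣ δ) := by
  classical
  obtain ⟨hkdvd, hkgcd⟩ := hk
  constructor
  · rintro ⟨r, hmk, hcop, hδ⟩
    have hδk : δ ∣ k := by
      rcases hδ with h0 | h
      · exfalso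
        apply hb
        rw [← hmk, h0, mul_zero, map_zero]
      · exact h
    have hsub : r * δ - b ∈ I := by rwa [Ideal.Quotient.eq] at hmk
    have hkd : k ∣ r * δ - b := hkdvd _ hsub
    have hδb : δ ∣ b := by
      have h1 : δ ∣ r * δ - b := hδk.trans hkd
      have h2 : δ ∣ r * δ := Dvd.intro_left r rfl
      have := dvd_sub h2 h1
      simpa using this
    refine ⟨hδb, hδk, fun d hdb hdk => ?_⟩
    have hdrδ : d ∣ r * δ := by
      have : r * δ = (r * δ - b) + b := by ring
      rw [this]
      exact dvd_add (hdk.trans hkd) hdb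
    have hrel : IsRelPrime d r := fun e hed her => hcop e her (hed.trans hdk)
    exact hrel.dvd_of_dvd_mul_left hdrδ
  · rintro ⟨hδb, hδk, hmax⟩
    obtain ⟨r₀, hr₀⟩ := hδb
    obtain ⟨m, hm⟩ := hδk
    have hδ0 : δ ≠ 0 := fun h0 => hk0 (by rw [hm, h0, zero_mul])
    -- fact F1: no prime divides both m and r₀
    have F1 : ∀ p : R, Prime p → p ∣ m → p ∣ r₀ → False := by
      intro p hp hpm hpr
      have h1 : δ * p ∣ b := by rw [hr₀]; exact mul_dvd_mul_left δ hpr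
      have h2 : δ * p ∣ k := by rw [hm]; exact mul_dvd_mul_left δ hpm
      have h3 : δ * p ∣ δ * 1 := by rw [mul_one]; exact hmax _ h1 h2
      exact hp.not_unit (isUnit_of_dvd_one ((mul_dvd_mul_iff_left hδ0).mp h3))
    obtain ⟨w, hwI, hw⟩ := aux_exists_coprime_multiplier I hI k hk0 hkdvd hkgcd k hk0
    set t : R := m * w with ht
    have hδtI : δ * t ∈ I := by
      have : δ * t = k * w := by rw [ht, hm]; ring
      rw [this]; exact hwI
    -- fact F2: no prime divides k, r₀ and t simultaneously
    have F2 : ∀ p : R, Prime p → p ∣ k → p ∣ r₀ → p ∣ t → False := by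
      intro p hp hpk hpr hpt
      rcases hp.dvd_mul.mp hpt with h | h
      · exact F1 p hp h hpr
      · exact hp.not_unit (hw p h hpk)
    set c : R := ((UniqueFactorizationMonoid.factors k).filter
      (fun p => ¬ p ∣ r₀ ∧ ¬ p ∣ t)).prod with hc
    refine ⟨r₀ + c * t, ?_, ?_, Or.inr ⟨m, hm⟩⟩
    · rw [Ideal.Quotient.eq]
      have : (r₀ + c * t) * δ - b = c * (δ * t) := by rw [hr₀]; ring
      rw [this]
      exact I.smul_mem c hδtI
    · apply aux_relprime_of_no_prime hk0
      intro p hp hpr hpk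
      by_cases hpr₀ : p ∣ r₀
      · -- then p ∤ t and p ∤ c, so p ∤ r₀ + c * t : contradiction
        have hpt : ¬ p ∣ t := fun h => F2 p hp hpk hpr₀ h
        have hpc : ¬ p ∣ c := by
          intro hpc
          obtain ⟨q, hqmem, hpq⟩ := hp.exists_mem_multiset_dvd hpc
          rw [Multiset.mem_filter] at hqmem
          obtain ⟨hqf, hqr, hqt⟩ := hqmem
          have hq : Prime q := UniqueFactorizationMonoid.prime_of_factor q hqf
          have hqp : q ∣ p := ((hp.irreducible.dvd_irreducible_iff_associated
            hq.irreducible).mp hpq).symm.dvd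
          exact hqr (hqp.trans hpr₀)
        have : p ∣ c * t := (dvd_add_right hpr₀).mp hpr
        rcases hp.dvd_mul.mp this with h | h
        · exact hpc h
        · exact hpt h
      · by_cases hpt : p ∣ t
        · exact hpr₀ ((dvd_add_right (Dvd.dvd.mul_left hpt c)).mp (by rwa [add_comm] at hpr))
        ·
          have hpc : p ∣ c := by
            obtain ⟨q, hqf, hassoc⟩ := UniqueFactorizationMonoid.exists_mem_factors_of_dvd
              hk0 hp.irreducible hpk
            have hqr : ¬ q ∣ r₀ := fun h => hpr₀ (hassoc.dvd.trans h)
            have hqt : ¬ q ∣ t := fun h => hpt (hassoc.dvd.trans h)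
            have hqmem : q ∈ (UniqueFactorizationMonoid.factors k).filter
                (fun p => ¬ p ∣ r₀ ∧ ¬ p ∣ t) :=
              Multiset.mem_filter.mpr ⟨hqf, hqr, hqt⟩
            exact hassoc.dvd.trans (Multiset.dvd_prod hqmem)
          have : p ∣ c * t := hpc.mul_right t
          exact hpr₀ ((dvd_add_right this).mp (by rwa [add_comm] at hpr))
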